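/- The recursively defined coefficients c₁ = 1/12, c_h = −(1/(2h+1)) Σ_{i=1}^{h−1} c_i c_{h−i} (h > 1) coincide with B_{2h}/(2h)! for all h ≥ 1, where B_n denotes the n-th Bernoulli number. -/

import Mathlib

open PowerSeries Finset

namespace Stmt16Aux

lemma derivative_exp' : d⁄dX ℚ (PowerSeries.exp ℚ) = PowerSeries.exp ℚ := by
  ext n
  rw [coeff_derivative, coeff_exp, coeff_exp]
  simp only [Algebra.algebraMap_self, RingHom.id_apply, Nat.factorial_succ]
  push_cast
  have : ((n : ℚ) + 1) ≠ 0 := by positivity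
  field_simp

lemma key_eq : (d⁄dX ℚ (bernoulliPowerSeries ℚ)) * X + bernoulliPowerSeries ℚ * bernoulliPowerSeries ℚ
    + bernoulliPowerSeries ℚ * X = bernoulliPowerSeries ℚ := by
  set B := bernoulliPowerSeries ℚ with hB
  have h0 : B * (PowerSeries.exp ℚ - 1) = X := bernoulliPowerSeries_mul_exp_sub_one ℚ
  have h1 : (d⁄dX ℚ B) * (PowerSeries.exp ℚ - 1) + B * PowerSeries.exp ℚ = 1 := by
    have h2 := congrArg (d⁄dX ℚ) h0
    rw [Derivation.leibniz, map_sub, Derivation.map_one_eq_zero, derivative_exp',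
      derivative_X, smul_eq_mul, smul_eq_mul, sub_zero] at h2
    linear_combination h2
  rw [← h0]
  linear_combination B * h1

lemma coeff_eq (n : ℕ) (hn : 1 ≤ n) :
    (bernoulli n / n.factorial) * n
      + (∑ k ∈ range (n + 1), (bernoulli k / k.factorial) * (bernoulli (n - k) / (n - k).factorial))
      + bernoulli (n - 1) / (n - 1).factorial = bernoulli n / n.factorial := by
  obtain ⟨m, rfl⟩ : ∃ m, n = m + 1 := ⟨n - 1, by omega⟩
  have h2 := congrArg (coeff (m + 1)) key_eq
  rw [map_add, map_add, coeff_succ_mul_X, coeff_succ_mul_X, coeff_derivative, coeff_mul,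
    Finset.Nat.sum_antidiagonal_eq_sum_range_succ_mk] at h2
  simp only [bernoulliPowerSeries, coeff_mk, Nat.add_sub_cancel, Algebra.algebraMap_self,
    RingHom.id_apply, Nat.succ_eq_add_one] at h2 ⊢
  push_cast at h2 ⊢
  linear_combination h2

lemma bernoulli_odd {n : ℕ} (h1 : Odd n) (h2 : 1 < n) : bernoulli n = 0 := by
  rw [bernoulli_eq_bernoulli'_of_ne_one (by omega)]
  exact bernoulli'_eq_zero_of_odd h1 h2

lemma sum_split (f : ℕ → ℚ) (m : ℕ) :
    ∑ k ∈ range (2 * m + 1), f k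
      = (∑ i ∈ range (m + 1), f (2 * i)) + ∑ i ∈ range m, f (2 * i + 1) := by
  induction m with
  | zero => simp
  | succ m ih =>
    have h1 : 2 * (m + 1) + 1 = (2 * m + 1) + 1 + 1 := by ring
    rw [h1, sum_range_succ, sum_range_succ, ih, sum_range_succ (fun i => f (2 * i)) (m + 1),
      sum_range_succ (fun i => f (2 * i + 1)) m]
    have e1 : 2 * (m + 1) = 2 * m + 1 + 1 := by ring
    rw [e1]
    ring

lemma quad (h : ℕ) (hh : 2 ≤ h) :
    bernoulli (2 * h) / ((2 * h).factorial : ℚ)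
      = -(1 / ((2 * h + 1 : ℕ) : ℚ)) * ∑ i ∈ Finset.Ico 1 h,
          (bernoulli (2 * i) / ((2 * i).factorial : ℚ))
            * (bernoulli (2 * (h - i)) / ((2 * (h - i)).factorial : ℚ)) := by
  have hmain := coeff_eq (2 * h) (by omega)
  have hodd : bernoulli (2 * h - 1) = 0 := bernoulli_odd ⟨h - 1, by omega⟩ (by omega)
  rw [sum_split (fun k => (bernoulli k / k.factorial) * (bernoulli (2 * h - k) / (2 * h - k).factorial)) h] at hmain
  have hz : ∑ i ∈ range h, (fun k => (bernoulli k / (k.factorial : ℚ)) * (bernoulli (2 * h - k) / ((2 * h - k).factorial : ℚ))) (2 * i + 1) = 0 := by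
    apply Finset.sum_eq_zero
    intro i _
    rcases Nat.eq_zero_or_pos i with rfl | hipos
    · simp [hodd]
    · simp only
      rw [bernoulli_odd ⟨i, by omega⟩ (by omega)]
      simp
  rw [hz, add_zero] at hmain
  have heven : ∑ i ∈ range (h + 1), (fun k => (bernoulli k / (k.factorial : ℚ)) * (bernoulli (2 * h - k) / ((2 * h - k).factorial : ℚ))) (2 * i)
      = 2 * (bernoulli (2 * h) / ((2 * h).factorial : ℚ))
        + ∑ i ∈ Finset.Ico 1 h,
          (bernoulli (2 * i) / ((2 * i).factorial : ℚ))
            * (bernoulli (2 * (h - i)) / ((2 * (h - i)).factorial : ℚ)) := by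
    rw [sum_range_succ, range_eq_Ico, Finset.sum_eq_sum_Ico_succ_bot (by omega)]
    simp only
    rw [Finset.sum_congr rfl (fun i hi => by
      simp only [Finset.mem_Ico] at hi
      rw [show 2 * h - 2 * i = 2 * (h - i) by omega])]
    simp only [Nat.mul_zero, Nat.sub_zero, Nat.sub_self, bernoulli_zero, Nat.factorial_zero]
    push_cast
    ring
  rw [heven, hodd] at hmain
  have hne : ((2 * h + 1 : ℕ) : ℚ) ≠ 0 := by positivity
  field_simp at hmain ⊢
  have hf : ((2 * h - 1).factorial : ℚ) ≠ 0 := by positivity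
  rw [mul_zero, add_zero] at hmain
  have hm := mul_right_cancel₀ hf hmain
  push_cast at hm ⊢
  linarith [hm]

end Stmt16Aux

theorem stmt16 (c : ℕ → ℚ) (h1 : c 1 = 1 / 12)
    (hrec : ∀ h : ℕ, 1 < h →
      c h = -(1 / ((2 * h + 1 : ℕ) : ℚ)) * ∑ i ∈ Finset.Ico 1 h, c i * c (h - i)) :
    ∀ h : ℕ, 1 ≤ h → c h = bernoulli (2 * h) / ((2 * h).factorial : ℚ) := by
  intro h
  induction h using Nat.strong_induction_on with
  | _ h ih =>
    intro hh
    rcases Nat.lt_or_ge h 2 with hlt | hge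
    · have : h = 1 := by omega
      subst this
      rw [h1]
      rw [show (2 * 1 : ℕ) = 2 from rfl, bernoulli_eq_bernoulli'_of_ne_one (by norm_num),
        bernoulli'_two]
      norm_num [Nat.factorial]
    · rw [hrec h (by omega), Stmt16Aux.quad h hge]
      congr 1
      apply Finset.sum_congr rfl
      intro i hi
      simp only [Finset.mem_Ico] at hi
      rw [ih i (by omega) (by omega), ih (h - i) (by omega) (by omega)]
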